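/- Vanishing of the coupling term in the score (U_{2_1,n} → 0). In the two-stage LAGO setup, define U_{2\_1,n} := (1/√n) Σ_{j≤J₂} Σ_{i≤n_j^{(2)}(n)} [ h′(⟨β*, X_j^{(2,n)}⟩) X_j^{(2,n)} − h′(⟨β*, x_j^{(2)}⟩) x_j^{(2)} ] ε_{ij}^{(2,n)} ∈ ℝ^d. Then U_{2\_1,n} → 0 in probability as n → ∞. -/

import Mathlib

open MeasureTheory ProbabilityTheory Filter
open scoped RealInnerProductSpace BigOperators NNReal Topology ENNReal

noncomputable section

/-- Concatenate `(1, a, z)` into a design vector in `ℝ^(1+P+Q)`. -/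
def designVec {P Q : ℕ} (a : EuclideanSpace ℝ (Fin P)) (z : EuclideanSpace ℝ (Fin Q)) :
    EuclideanSpace ℝ (Fin (1 + P + Q)) :=
  (EuclideanSpace.equiv (Fin (1 + P + Q)) ℝ).symm
    (Fin.append (Fin.append ![(1 : ℝ)] ((EuclideanSpace.equiv (Fin P) ℝ) a))
      ((EuclideanSpace.equiv (Fin Q) ℝ) z))

/-- The two-stage LAGO setup. -/
structure LagoSetup (Ω : Type) [MeasurableSpace Ω] (Pr : Measure Ω) (J1 J2 P Q : ℕ) where
  hJ1 : 1 ≤ J1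
  hJ2 : 1 ≤ J2
  hP : 1 ≤ P
  hQ : 1 ≤ Q
  /-- stage-1 interventions -/
  a1 : Fin J1 → EuclideanSpace ℝ (Fin P)
  /-- stage-1 center covariates -/
  z1 : Fin J1 → EuclideanSpace ℝ (Fin Q)
  /-- limit stage-2 interventions -/
  a2 : Fin J2 → EuclideanSpace ℝ (Fin P)
  /-- stage-2 center covariates -/
  z2 : Fin J2 → EuclideanSpace ℝ (Fin Q)
  /-- random stage-2 interventions, for each total sample size `n` -/
  A2 : ℕ → Fin J2 → Ω → EuclideanSpace ℝ (Fin P)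
  measA2 : ∀ n j, Measurable (A2 n j)
  /-- per-center sample sizes, stage 1 -/
  n1 : ℕ → Fin J1 → ℕ
  /-- per-center sample sizes, stage 2 -/
  n2 : ℕ → Fin J2 → ℕ
  sum_sizes : ∀ n, (∑ j, n1 n j) + (∑ j, n2 n j) = n
  α1 : Fin J1 → ℝ
  α2 : Fin J2 → ℝ
  α1_pos : ∀ j, 0 < α1 j
  α2_pos : ∀ j, 0 < α2 j
  α1_lim : ∀ j, Tendsto (fun n : ℕ => (n1 n j : ℝ) / n) atTop (𝓝 (α1 j))
  α2_lim : ∀ j, Tendsto (fun n : ℕ => (n2 n j : ℝ) / n) atTop (𝓝 (α2 j))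
  /-- the mean function (inverse link) -/
  h : ℝ → ℝ
  h_smooth : ContDiff ℝ 2 h
  /-- the (compact) parameter space -/
  B : Set (EuclideanSpace ℝ (Fin (1 + P + Q)))
  B_compact : IsCompact B
  /-- the true parameter -/
  βstar : EuclideanSpace ℝ (Fin (1 + P + Q))
  βstar_mem : βstar ∈ B
  /-- stage-1 errors -/
  ε1 : Fin J1 → ℕ → Ω → ℝ
  /-- realized stage-2 errors -/
  ε2n : ℕ → Fin J2 → ℕ → Ω → ℝ
  /-- coupled i.i.d. stage-2 error arrays -/
  ε2 : Fin J2 → ℕ → Ω → ℝ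
  meas_ε1 : ∀ j i, Measurable (ε1 j i)
  meas_ε2n : ∀ n j i, Measurable (ε2n n j i)
  meas_ε2 : ∀ j i, Measurable (ε2 j i)
  /-- stage-1 error variances σ₁²(j) -/
  var1 : Fin J1 → ℝ
  /-- stage-2 error variances σ₂²(j) -/
  var2 : Fin J2 → ℝ
  /-- Assumption 3: convergence in probability of the stage-2 interventions -/
  A2_tendsto : ∀ j, TendstoInMeasure Pr (fun n => A2 n j) atTop (fun _ => a2 j)
  /-- Assumption 4: all interventions and errors take values in one compact set -/
  bound : ℝ
  A2_bdd : ∀ n j ω, ‖A2 n j ω‖ ≤ bound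
  ε1_bdd : ∀ j i ω, |ε1 j i ω| ≤ bound
  ε2n_bdd : ∀ n j i ω, |ε2n n j i ω| ≤ bound
  ε2_bdd : ∀ j i ω, |ε2 j i ω| ≤ bound
  /-- identical distribution within each error array -/
  ε1_ident : ∀ j i, IdentDistrib (ε1 j i) (ε1 j 0) Pr Pr
  ε2_ident : ∀ j i, IdentDistrib (ε2 j i) (ε2 j 0) Pr Pr
  ε1_mean : ∀ j i, ∫ ω, ε1 j i ω ∂Pr = 0
  ε2_mean : ∀ j i, ∫ ω, ε2 j i ω ∂Pr = 0
  ε1_var : ∀ j i, ∫ ω, (ε1 j i ω) ^ 2 ∂Pr = var1 j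
  ε2_var : ∀ j i, ∫ ω, (ε2 j i ω) ^ 2 ∂Pr = var2 j
  /-- all ε¹ and ε² variables are mutually independent -/
  ε_indep : iIndepFun
      (Sum.elim (fun p : Fin J1 × ℕ => fun ω => ε1 p.1 p.2 ω)
        (fun p : Fin J2 × ℕ => fun ω => ε2 p.1 p.2 ω)) Pr
  /-- the coupled ε² arrays are independent of (ε¹, (A_j^{(2,n)})_{j,n}) -/
  ε2_indep_rest : IndepFun
      (fun ω => (fun p : Fin J2 × ℕ => ε2 p.1 p.2 ω))
      (fun ω => ((fun p : Fin J1 × ℕ => ε1 p.1 p.2 ω),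
        (fun q : ℕ × Fin J2 => A2 q.1 q.2 ω))) Pr
  /-- Assumption 5: joint-law equality between realized and coupled errors -/
  jointLaw : ∀ n,
    Measure.map (fun ω => ((fun p : Fin J1 × ℕ => ε1 p.1 p.2 ω),
        (fun j => A2 n j ω), (fun p : Fin J2 × ℕ => ε2n n p.1 p.2 ω))) Pr
    = Measure.map (fun ω => ((fun p : Fin J1 × ℕ => ε1 p.1 p.2 ω),
        (fun j => A2 n j ω), (fun p : Fin J2 × ℕ => ε2 p.1 p.2 ω))) Pr

namespace LagoSetup

variable {Ω : Type} [MeasurableSpace Ω] {Pr : Measure Ω} {J1 J2 P Q : ℕ}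

/-- stage-1 design vectors x_j^{(1)} = (1, a_j^{(1)}, z_j^{(1)}) -/
def x1v (S : LagoSetup Ω Pr J1 J2 P Q) (j : Fin J1) : EuclideanSpace ℝ (Fin (1 + P + Q)) :=
  designVec (S.a1 j) (S.z1 j)

/-- limit stage-2 design vectors x_j^{(2)} = (1, a_j^{(2)}, z_j^{(2)}) -/
def x2v (S : LagoSetup Ω Pr J1 J2 P Q) (j : Fin J2) : EuclideanSpace ℝ (Fin (1 + P + Q)) :=
  designVec (S.a2 j) (S.z2 j)

/-- random stage-2 design vectors X_j^{(2,n)} = (1, A_j^{(2,n)}, z_j^{(2)}) -/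
def X2v (S : LagoSetup Ω Pr J1 J2 P Q) (n : ℕ) (j : Fin J2) (ω : Ω) :
    EuclideanSpace ℝ (Fin (1 + P + Q)) :=
  designVec (S.A2 n j ω) (S.z2 j)

/-- The LAGO estimating function U_n(β). -/
def U (S : LagoSetup Ω Pr J1 J2 P Q) (n : ℕ) (β : EuclideanSpace ℝ (Fin (1 + P + Q))) (ω : Ω) :
    EuclideanSpace ℝ (Fin (1 + P + Q)) :=
  (n : ℝ)⁻¹ •
    ((∑ j, ∑ i ∈ Finset.range (S.n1 n j),
        (deriv S.h ⟪β, S.x1v j⟫ *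
          (S.h ⟪S.βstar, S.x1v j⟫ + S.ε1 j i ω - S.h ⟪β, S.x1v j⟫)) • S.x1v j) +
      (∑ j, ∑ i ∈ Finset.range (S.n2 n j),
        (deriv S.h ⟪β, S.X2v n j ω⟫ *
          (S.h ⟪S.βstar, S.X2v n j ω⟫ + S.ε2n n j i ω - S.h ⟪β, S.X2v n j ω⟫)) •
          S.X2v n j ω))

/-- The deterministic limit u(β) of the estimating function. -/
def uLim (S : LagoSetup Ω Pr J1 J2 P Q) (β : EuclideanSpace ℝ (Fin (1 + P + Q))) :
    EuclideanSpace ℝ (Fin (1 + P + Q)) :=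
  (∑ j, (S.α1 j * deriv S.h ⟪β, S.x1v j⟫ *
      (S.h ⟪S.βstar, S.x1v j⟫ - S.h ⟪β, S.x1v j⟫)) • S.x1v j) +
    (∑ j, (S.α2 j * deriv S.h ⟪β, S.x2v j⟫ *
      (S.h ⟪S.βstar, S.x2v j⟫ - S.h ⟪β, S.x2v j⟫)) • S.x2v j)

/-- The limiting Jacobian matrix J(β*). -/
def Jmat (S : LagoSetup Ω Pr J1 J2 P Q) : Matrix (Fin (1 + P + Q)) (Fin (1 + P + Q)) ℝ :=
  Matrix.of fun p q =>
    (∑ j, S.α1 j * (deriv S.h ⟪S.βstar, S.x1v j⟫) ^ 2 * (S.x1v j p * S.x1v j q)) +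
      (∑ j, S.α2 j * (deriv S.h ⟪S.βstar, S.x2v j⟫) ^ 2 * (S.x2v j p * S.x2v j q))

/-- The limiting score covariance matrix V(β*). -/
def Vmat (S : LagoSetup Ω Pr J1 J2 P Q) : Matrix (Fin (1 + P + Q)) (Fin (1 + P + Q)) ℝ :=
  Matrix.of fun p q =>
    (∑ j, S.α1 j * S.var1 j * (deriv S.h ⟪S.βstar, S.x1v j⟫) ^ 2 * (S.x1v j p * S.x1v j q)) +
      (∑ j, S.α2 j * S.var2 j * (deriv S.h ⟪S.βstar, S.x2v j⟫) ^ 2 * (S.x2v j p * S.x2v j q))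

end LagoSetup

/-- `μ` is the centered Gaussian law on ℝ^d with covariance matrix `C`
(characterized via all one-dimensional projections, Cramér–Wold). -/
def IsCenteredGaussianLaw {d : ℕ} (μ : Measure (EuclideanSpace ℝ (Fin d)))
    (C : Matrix (Fin d) (Fin d) ℝ) : Prop :=
  IsProbabilityMeasure μ ∧
    ∀ l : EuclideanSpace ℝ (Fin d),
      Measure.map (fun v => ⟪l, v⟫) μ =
        gaussianReal 0 (Real.toNNReal (∑ p, ∑ q, l p * C p q * l q))

/-- Convergence in distribution: weak convergence of the laws. -/
def TendstoInDistribution {Ω : Type} [MeasurableSpace Ω] {E : Type*}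
    [MeasurableSpace E] [TopologicalSpace E]
    (X : ℕ → Ω → E) (Pr : Measure Ω) (μ : Measure E) : Prop :=
  ∀ f : BoundedContinuousFunction E ℝ,
    Tendsto (fun n => ∫ ω, f (X n ω) ∂Pr) atTop (𝓝 (∫ x, f x ∂μ))

section AuxLemmas

variable {Ω : Type} [MeasurableSpace Ω] {Pr : Measure Ω}

lemma aux_integrable_of_bdd [IsFiniteMeasure Pr] {f : Ω → ℝ} (hf : Measurable f) {C : ℝ}
    (h : ∀ ω, |f ω| ≤ C) : Integrable f Pr :=
  ⟨hf.aestronglyMeasurable,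
    HasFiniteIntegral.of_bounded (C := C) (ae_of_all _ fun ω => by
      simpa [Real.norm_eq_abs] using h ω)⟩

lemma aux_meas_abs_ge_le [IsFiniteMeasure Pr] {f : Ω → ℝ} (hf : Measurable f) {C : ℝ}
    (hC : ∀ ω, |f ω| ≤ C) {M V : ℝ} (hM : 0 < M)
    (hV : ∫ ω, f ω ^ 2 ∂Pr ≤ V) :
    Pr {ω | M ≤ |f ω|} ≤ ENNReal.ofReal (V / M ^ 2) := by
  have hint : Integrable (fun ω => f ω ^ 2) Pr := by
    refine aux_integrable_of_bdd (hf.pow_const 2) (C := C ^ 2) fun ω => ?_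
    rw [abs_pow]
    exact pow_le_pow_left₀ (abs_nonneg _) (hC ω) 2
  have hsub : {ω | M ≤ |f ω|} ⊆ {ω | M ^ 2 ≤ f ω ^ 2} := fun ω hω => by
    have h2 : M ^ 2 ≤ |f ω| ^ 2 := pow_le_pow_left₀ hM.le hω 2
    simpa [sq_abs] using h2
  have hmarkov := mul_meas_ge_le_integral_of_nonneg
    (ae_of_all Pr fun ω => sq_nonneg (f ω)) hint (M ^ 2)
  have hne : Pr {ω | M ^ 2 ≤ f ω ^ 2} ≠ ⊤ := measure_ne_top _ _
  have h1 : (Pr {ω | M ^ 2 ≤ f ω ^ 2}).toReal ≤ V / M ^ 2 := by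
    rw [le_div_iff₀ (by positivity)]
    calc (Pr {ω | M ^ 2 ≤ f ω ^ 2}).toReal * M ^ 2
        = M ^ 2 * (Pr {ω | M ^ 2 ≤ f ω ^ 2}).toReal := mul_comm _ _
      _ ≤ ∫ ω, f ω ^ 2 ∂Pr := hmarkov
      _ ≤ V := hV
  calc Pr {ω | M ≤ |f ω|} ≤ Pr {ω | M ^ 2 ≤ f ω ^ 2} := measure_mono hsub
    _ = ENNReal.ofReal (Pr {ω | M ^ 2 ≤ f ω ^ 2}).toReal := (ENNReal.ofReal_toReal hne).symm
    _ ≤ ENNReal.ofReal (V / M ^ 2) := ENNReal.ofReal_le_ofReal h1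

lemma aux_continuous_append_left {m n : ℕ} (c : Fin n → ℝ) :
    Continuous fun f : Fin m → ℝ => Fin.append f c := by
  refine continuous_pi fun i => ?_
  refine Fin.addCases (motive := fun i => Continuous fun f : Fin m → ℝ => Fin.append f c i)
    (fun i => ?_) (fun i => ?_) i
  · simp only [Fin.append_left]
    exact continuous_apply i
  · simp only [Fin.append_right]
    exact continuous_const

lemma aux_continuous_append_right {m n : ℕ} (c : Fin m → ℝ) :
    Continuous fun f : Fin n → ℝ => Fin.append c f := by
  refine continuous_pi fun i => ?_
  refine Fin.addCases (motive := fun i => Continuous fun f : Fin n → ℝ => Fin.append c f i)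
    (fun i => ?_) (fun i => ?_) i
  · simp only [Fin.append_left]
    exact continuous_const
  · simp only [Fin.append_right]
    exact continuous_apply i

lemma aux_continuous_designVec {P Q : ℕ} (z : EuclideanSpace ℝ (Fin Q)) :
    Continuous fun a : EuclideanSpace ℝ (Fin P) => designVec a z := by
  have h1 : Continuous fun a : EuclideanSpace ℝ (Fin P) => (EuclideanSpace.equiv (Fin P) ℝ) a :=
    (EuclideanSpace.equiv (Fin P) ℝ).continuous
  have h2 : Continuous fun a : EuclideanSpace ℝ (Fin P) =>
      Fin.append ![(1 : ℝ)] ((EuclideanSpace.equiv (Fin P) ℝ) a) :=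
    (aux_continuous_append_right _).comp h1
  have h3 : Continuous fun a : EuclideanSpace ℝ (Fin P) =>
      Fin.append (Fin.append ![(1 : ℝ)] ((EuclideanSpace.equiv (Fin P) ℝ) a))
        ((EuclideanSpace.equiv (Fin Q) ℝ) z) :=
    (aux_continuous_append_left _).comp h2
  exact ((EuclideanSpace.equiv (Fin (1 + P + Q)) ℝ).symm.continuous).comp h3

lemma aux_continuous_score {P Q : ℕ} {h : ℝ → ℝ} (hh : Continuous (deriv h))
    (β : EuclideanSpace ℝ (Fin (1 + P + Q))) (z : EuclideanSpace ℝ (Fin Q)) :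
    Continuous fun a : EuclideanSpace ℝ (Fin P) =>
      (deriv h ⟪β, designVec a z⟫) • designVec a z :=
  (hh.comp (continuous_const.inner (aux_continuous_designVec z))).smul
    (aux_continuous_designVec z)

lemma aux_tendstoInMeasure_comp {P d : ℕ}
    {A : ℕ → Ω → EuclideanSpace ℝ (Fin P)} {a : EuclideanSpace ℝ (Fin P)}
    (hA : TendstoInMeasure Pr A atTop fun _ => a) {C : ℝ} (hbdd : ∀ n ω, ‖A n ω‖ ≤ C)
    {g : EuclideanSpace ℝ (Fin P) → EuclideanSpace ℝ (Fin d)} (hg : Continuous g) :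
    TendstoInMeasure Pr (fun n ω => g (A n ω)) atTop fun _ => g a := by
  rw [tendstoInMeasure_iff_dist] at hA ⊢
  intro ε hε
  have hK : IsCompact (Metric.closedBall (0 : EuclideanSpace ℝ (Fin P)) (max C ‖a‖)) :=
    isCompact_closedBall _ _
  obtain ⟨δ, hδ, hδ'⟩ := Metric.uniformContinuousOn_iff.mp
    (hK.uniformContinuousOn_of_continuous hg.continuousOn) ε hε
  have hsub : ∀ n, {ω | ε ≤ dist (g (A n ω)) (g a)} ⊆ {ω | δ ≤ dist (A n ω) a} := by
    intro n ω hω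
    by_contra hcon
    simp only [Set.mem_setOf_eq, not_le] at hcon
    have h1 : A n ω ∈ Metric.closedBall (0 : EuclideanSpace ℝ (Fin P)) (max C ‖a‖) := by
      simpa [mem_closedBall_zero_iff] using le_max_of_le_left (hbdd n ω)
    have h2 : a ∈ Metric.closedBall (0 : EuclideanSpace ℝ (Fin P)) (max C ‖a‖) := by
      simpa [mem_closedBall_zero_iff] using le_max_right C ‖a‖
    exact absurd hω (not_le.2 (hδ' _ h1 _ h2 hcon))
  exact tendsto_of_tendsto_of_tendsto_of_le_of_le tendsto_const_nhds (hA δ hδ)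
    (fun n => zero_le) (fun n => measure_mono (hsub n))

variable {J1 J2 P Q : ℕ}

/-- The coupling domain. -/
abbrev LagoDom (J1 J2 P : ℕ) : Type :=
  (Fin J1 × ℕ → ℝ) × (Fin J2 → EuclideanSpace ℝ (Fin P)) × (Fin J2 × ℕ → ℝ)

/-- The score summand. -/
def lagoG (S : LagoSetup Ω Pr J1 J2 P Q) (j : Fin J2) (a : EuclideanSpace ℝ (Fin P)) :
    EuclideanSpace ℝ (Fin (1 + P + Q)) :=
  (deriv S.h ⟪S.βstar, designVec a (S.z2 j)⟫) • designVec a (S.z2 j)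

/-- The coupling statistic as a function of interventions and errors. -/
def lagoPhi (S : LagoSetup Ω Pr J1 J2 P Q) (n : ℕ) (y : LagoDom J1 J2 P) :
    EuclideanSpace ℝ (Fin (1 + P + Q)) :=
  (Real.sqrt (n : ℝ))⁻¹ • ∑ j, ∑ i ∈ Finset.range (S.n2 n j),
    y.2.2 (j, i) • (lagoG S j (y.2.1 j) - lagoG S j (S.a2 j))

def lagoW (S : LagoSetup Ω Pr J1 J2 P Q) (n : ℕ) (ω : Ω) : LagoDom J1 J2 P :=
  ((fun p => S.ε1 p.1 p.2 ω), (fun j => S.A2 n j ω), (fun p => S.ε2n n p.1 p.2 ω))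

def lagoW' (S : LagoSetup Ω Pr J1 J2 P Q) (n : ℕ) (ω : Ω) : LagoDom J1 J2 P :=
  ((fun p => S.ε1 p.1 p.2 ω), (fun j => S.A2 n j ω), (fun p => S.ε2 p.1 p.2 ω))

lemma lagoG_continuous (S : LagoSetup Ω Pr J1 J2 P Q) (j : Fin J2) :
    Continuous (lagoG S j) :=
  aux_continuous_score (S.h_smooth.continuous_deriv (by norm_num)) _ _

lemma lagoPhi_measurable (S : LagoSetup Ω Pr J1 J2 P Q) (n : ℕ) :
    Measurable (lagoPhi S n) := by
  have hc : Continuous (lagoPhi S n) := by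
    unfold lagoPhi
    refine continuous_const.fun_smul ?_
    refine continuous_finset_sum _ fun j _ => continuous_finset_sum _ fun i _ => ?_
    refine Continuous.fun_smul ?_ ?_
    · exact (continuous_apply ((j, i) : Fin J2 × ℕ)).comp (continuous_snd.comp continuous_snd)
    · exact (((lagoG_continuous S j).comp
        ((continuous_apply j).comp (continuous_fst.comp continuous_snd))).sub continuous_const)
  exact hc.measurable

lemma lagoW_measurable (S : LagoSetup Ω Pr J1 J2 P Q) (n : ℕ) :
    Measurable (lagoW S n) := by
  unfold lagoW
  refine Measurable.prodMk ?_ (Measurable.prodMk ?_ ?_)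
  · exact measurable_pi_lambda _ fun p => S.meas_ε1 p.1 p.2
  · exact measurable_pi_lambda _ fun j => S.measA2 n j
  · exact measurable_pi_lambda _ fun p => S.meas_ε2n n p.1 p.2

lemma lagoW'_measurable (S : LagoSetup Ω Pr J1 J2 P Q) (n : ℕ) :
    Measurable (lagoW' S n) := by
  unfold lagoW'
  refine Measurable.prodMk ?_ (Measurable.prodMk ?_ ?_)
  · exact measurable_pi_lambda _ fun p => S.meas_ε1 p.1 p.2
  · exact measurable_pi_lambda _ fun j => S.measA2 n j
  · exact measurable_pi_lambda _ fun p => S.meas_ε2 p.1 p.2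

lemma lago_map_eq (S : LagoSetup Ω Pr J1 J2 P Q) (n : ℕ) :
    Measure.map (fun ω => lagoPhi S n (lagoW S n ω)) Pr
      = Measure.map (fun ω => lagoPhi S n (lagoW' S n ω)) Pr := by
  have hmapW : Measure.map (lagoW S n) Pr = Measure.map (lagoW' S n) Pr := S.jointLaw n
  calc Measure.map (fun ω => lagoPhi S n (lagoW S n ω)) Pr
      = Measure.map (lagoPhi S n) (Measure.map (lagoW S n) Pr) :=
        (Measure.map_map (lagoPhi_measurable S n) (lagoW_measurable S n)).symm
    _ = Measure.map (lagoPhi S n) (Measure.map (lagoW' S n) Pr) := by rw [hmapW]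
    _ = _ := Measure.map_map (lagoPhi_measurable S n) (lagoW'_measurable S n)

lemma aux_sum_sq_le [IsProbabilityMeasure Pr] (S : LagoSetup Ω Pr J1 J2 P Q)
    (hb0 : 0 ≤ S.bound) (N : ℕ) (j : Fin J2) :
    ∫ ω, (∑ i ∈ Finset.range N, S.ε2 j i ω) ^ 2 ∂Pr ≤ (N : ℝ) * S.bound ^ 2 := by
  have hmul_bdd : ∀ i i' : ℕ, ∀ ω, |S.ε2 j i ω * S.ε2 j i' ω| ≤ S.bound ^ 2 := by
    intro i i' ω
    rw [abs_mul, sq]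
    exact mul_le_mul (S.ε2_bdd j i ω) (S.ε2_bdd j i' ω) (abs_nonneg _) hb0
  have hint : ∀ i i' : ℕ, Integrable (fun ω => S.ε2 j i ω * S.ε2 j i' ω) Pr := fun i i' =>
    aux_integrable_of_bdd ((S.meas_ε2 j i).mul (S.meas_ε2 j i')) (hmul_bdd i i')
  have hexp : ∫ ω, (∑ i ∈ Finset.range N, S.ε2 j i ω) ^ 2 ∂Pr
      = ∑ i ∈ Finset.range N, ∑ i' ∈ Finset.range N, ∫ ω, S.ε2 j i ω * S.ε2 j i' ω ∂Pr := by
    rw [show (fun ω => (∑ i ∈ Finset.range N, S.ε2 j i ω) ^ 2)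
        = fun ω => ∑ i ∈ Finset.range N, ∑ i' ∈ Finset.range N, S.ε2 j i ω * S.ε2 j i' ω from
      funext fun ω => by rw [sq, Finset.sum_mul_sum]]
    rw [integral_finset_sum _ fun i _ => integrable_finset_sum _ fun i' _ => hint i i']
    exact Finset.sum_congr rfl fun i _ => integral_finset_sum _ fun i' _ => hint i i'
  rw [hexp]
  calc ∑ i ∈ Finset.range N, ∑ i' ∈ Finset.range N, ∫ ω, S.ε2 j i ω * S.ε2 j i' ω ∂Pr
      ≤ ∑ i ∈ Finset.range N, ∑ i' ∈ Finset.range N, (if i = i' then S.bound ^ 2 else 0) := by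
        refine Finset.sum_le_sum fun i _ => Finset.sum_le_sum fun i' _ => ?_
        by_cases hii : i = i'
        · subst hii
          simp only [if_pos rfl]
          calc ∫ ω, S.ε2 j i ω * S.ε2 j i ω ∂Pr
              ≤ ∫ _ω, S.bound ^ 2 ∂Pr := integral_mono (hint i i) (integrable_const _)
                (fun ω => by
                  have h3 := abs_le.mp (S.ε2_bdd j i ω)
                  nlinarith [h3.1, h3.2])
            _ = S.bound ^ 2 := by simp
        · simp only [if_neg hii]
          have hne : (Sum.inr (j, i) : (Fin J1 × ℕ) ⊕ (Fin J2 × ℕ)) ≠ Sum.inr (j, i') := by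
            simp [hii]
          have hind : IndepFun (fun ω => S.ε2 j i ω) (fun ω => S.ε2 j i' ω) Pr :=
            S.ε_indep.indepFun hne
          have hz : ∫ ω, S.ε2 j i ω * S.ε2 j i' ω ∂Pr = 0 := by
            rw [IndepFun.integral_fun_mul_eq_mul_integral hind (S.meas_ε2 j i).aestronglyMeasurable
              (S.meas_ε2 j i').aestronglyMeasurable, S.ε2_mean j i, zero_mul]
          exact le_of_eq hz
    _ = ∑ i ∈ Finset.range N, S.bound ^ 2 := Finset.sum_congr rfl fun i hi => by
          rw [Finset.sum_ite_eq, if_pos hi]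
    _ = (N : ℝ) * S.bound ^ 2 := by
          simp [Finset.sum_const, Finset.card_range, nsmul_eq_mul]

end AuxLemmas


/-- **Vanishing of the coupling term in the score (U_{2_1,n} → 0):**
(1/√n) Σ_{j≤J₂} Σ_{i≤n_j^{(2)}(n)} [h′(⟨β*, X_j^{(2,n)}⟩) X_j^{(2,n)} − h′(⟨β*, x_j^{(2)}⟩) x_j^{(2)}] ε_{ij}^{(2,n)}
→ 0 in probability. -/
theorem lago_coupling_term_vanishes
    {Ω : Type} [MeasurableSpace Ω] {Pr : Measure Ω} [IsProbabilityMeasure Pr]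
    {J1 J2 P Q : ℕ} (S : LagoSetup Ω Pr J1 J2 P Q) :
    TendstoInMeasure Pr
      (fun (n : ℕ) ω => (Real.sqrt (n : ℝ))⁻¹ •
        ∑ j, ∑ i ∈ Finset.range (S.n2 n j),
          S.ε2n n j i ω •
            ((deriv S.h ⟪S.βstar, S.X2v n j ω⟫) • S.X2v n j ω -
              (deriv S.h ⟪S.βstar, S.x2v j⟫) • S.x2v j))
      atTop (fun _ => (0 : EuclideanSpace ℝ (Fin (1 + P + Q)))) := by
  classical
  have hΩ : Nonempty Ω := by
    by_contra hcon
    rw [not_nonempty_iff] at hcon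
    have h1 : Pr Set.univ = 1 := measure_univ
    rw [Set.univ_eq_empty_iff.mpr hcon, measure_empty] at h1
    exact zero_ne_one h1
  obtain ⟨ω0⟩ := hΩ
  have hb0 : 0 ≤ S.bound := le_trans (abs_nonneg _) (S.ε2_bdd ⟨0, S.hJ2⟩ 0 ω0)
  have hJ2ne : Nonempty (Fin J2) := ⟨⟨0, S.hJ2⟩⟩
  have hJ2R : (0 : ℝ) < (J2 : ℝ) := by exact_mod_cast S.hJ2
  rw [tendstoInMeasure_iff_dist]
  intro ε hε
  show Tendsto (fun n => Pr {ω | ε ≤ dist (lagoPhi S n (lagoW S n ω))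
      ((fun _ : ℕ => (0 : EuclideanSpace ℝ (Fin (1 + P + Q)))) n)}) atTop (𝓝 0)
  have hsetm : MeasurableSet {y : EuclideanSpace ℝ (Fin (1 + P + Q)) | ε ≤ dist y 0} :=
    measurableSet_le measurable_const (measurable_id.dist measurable_const)
  have hkey : ∀ n : ℕ, Pr {ω | ε ≤ dist (lagoPhi S n (lagoW S n ω)) 0}
      = Pr {ω | ε ≤ dist (lagoPhi S n (lagoW' S n ω)) 0} := by
    intro n
    have hT : Measurable fun ω => lagoPhi S n (lagoW S n ω) :=
      (lagoPhi_measurable S n).comp (lagoW_measurable S n)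
    have hT' : Measurable fun ω => lagoPhi S n (lagoW' S n ω) :=
      (lagoPhi_measurable S n).comp (lagoW'_measurable S n)
    have e1 : {ω | ε ≤ dist (lagoPhi S n (lagoW S n ω)) 0}
        = (fun ω => lagoPhi S n (lagoW S n ω)) ⁻¹' {y | ε ≤ dist y 0} := rfl
    have e2 : {ω | ε ≤ dist (lagoPhi S n (lagoW' S n ω)) 0}
        = (fun ω => lagoPhi S n (lagoW' S n ω)) ⁻¹' {y | ε ≤ dist y 0} := rfl
    rw [e1, e2, ← Measure.map_apply hT hsetm, ← Measure.map_apply hT' hsetm, lago_map_eq S n]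
  simp only [hkey]
  rw [ENNReal.tendsto_atTop_zero]
  intro δ hδ
  set δ' : ℝ≥0∞ := min δ 1 with hδ'def
  have hδ'pos : 0 < δ' := lt_min hδ zero_lt_one
  have hδ'le : δ' ≤ δ := min_le_left _ _
  set c : ℝ≥0∞ := 2 * (J2 : ℝ≥0∞) with hc
  have hc0 : c ≠ 0 := by
    refine mul_ne_zero two_ne_zero ?_
    exact_mod_cast Nat.cast_ne_zero.mpr (Nat.one_le_iff_ne_zero.mp S.hJ2)
  have hcne : c ≠ ⊤ := ENNReal.mul_ne_top (by simp) (ENNReal.natCast_ne_top _)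
  set δ'' : ℝ≥0∞ := δ' / c with hδ''def
  have hδ''pos : 0 < δ'' := ENNReal.div_pos hδ'pos.ne' hcne
  -- choose M by Chebyshev budget
  have hMex : ∃ M : ℝ, 0 < M ∧ ENNReal.ofReal (S.bound ^ 2 / M ^ 2) < δ'' := by
    have h1 : Tendsto (fun M : ℝ => S.bound ^ 2 / M ^ 2) atTop (𝓝 0) :=
      tendsto_const_nhds.div_atTop (tendsto_pow_atTop two_ne_zero)
    have h2 : Tendsto (fun M : ℝ => ENNReal.ofReal (S.bound ^ 2 / M ^ 2)) atTop (𝓝 0) := by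
      simpa using ENNReal.tendsto_ofReal h1
    obtain ⟨M, hM⟩ := ((h2.eventually_lt_const hδ''pos).and (eventually_gt_atTop 0)).exists
    exact ⟨M, hM.2, hM.1⟩
  obtain ⟨M, hM, hMlt⟩ := hMex
  set εJ : ℝ := ε / J2 with hεJdef
  have hεJ : 0 < εJ := div_pos hε hJ2R
  set εv : ℝ := εJ / M with hεvdef
  have hεv : 0 < εv := div_pos hεJ hM
  -- convergence of the random design vectors
  have hv : ∀ j : Fin J2, TendstoInMeasure Pr (fun n ω => lagoG S j (S.A2 n j ω)) atTop
      (fun _ => lagoG S j (S.a2 j)) := fun j =>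
    aux_tendstoInMeasure_comp (S.A2_tendsto j) (fun n ω => S.A2_bdd n j ω) (lagoG_continuous S j)
  have hvev : ∀ᶠ n : ℕ in atTop, ∀ j : Fin J2,
      Pr {ω | εv ≤ dist (lagoG S j (S.A2 n j ω)) (lagoG S j (S.a2 j))} ≤ δ'' := by
    rw [eventually_all]
    intro j
    exact ((tendstoInMeasure_iff_dist.mp (hv j) εv hεv).eventually_lt_const hδ''pos).mono fun n h => h.le
  have hfinal : ∀ᶠ n : ℕ in atTop,
      Pr {ω | ε ≤ dist (lagoPhi S n (lagoW' S n ω)) 0} ≤ δ := by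
    filter_upwards [hvev, eventually_ge_atTop 1] with n hvn hn1
    have hr0 : (0 : ℝ) ≤ (Real.sqrt (n : ℝ))⁻¹ := inv_nonneg.2 (Real.sqrt_nonneg _)
    -- pointwise norm bound
    have hpt : ∀ ω, dist (lagoPhi S n (lagoW' S n ω)) 0
        ≤ ∑ j, ((Real.sqrt (n : ℝ))⁻¹ * |∑ i ∈ Finset.range (S.n2 n j), S.ε2 j i ω|)
            * ‖lagoG S j (S.A2 n j ω) - lagoG S j (S.a2 j)‖ := by
      intro ω
      show dist ((Real.sqrt (n : ℝ))⁻¹ • ∑ j, ∑ i ∈ Finset.range (S.n2 n j),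
          S.ε2 j i ω • (lagoG S j (S.A2 n j ω) - lagoG S j (S.a2 j))) 0 ≤ _
      rw [dist_zero_right]
      calc ‖(Real.sqrt (n : ℝ))⁻¹ • ∑ j, ∑ i ∈ Finset.range (S.n2 n j),
              S.ε2 j i ω • (lagoG S j (S.A2 n j ω) - lagoG S j (S.a2 j))‖
          = (Real.sqrt (n : ℝ))⁻¹ * ‖∑ j, (∑ i ∈ Finset.range (S.n2 n j), S.ε2 j i ω) •
              (lagoG S j (S.A2 n j ω) - lagoG S j (S.a2 j))‖ := by
            rw [norm_smul, Real.norm_eq_abs, abs_of_nonneg hr0]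
            congr 2
            exact Finset.sum_congr rfl fun j _ => (Finset.sum_smul).symm
        _ ≤ (Real.sqrt (n : ℝ))⁻¹ * ∑ j, ‖(∑ i ∈ Finset.range (S.n2 n j), S.ε2 j i ω) •
              (lagoG S j (S.A2 n j ω) - lagoG S j (S.a2 j))‖ :=
            mul_le_mul_of_nonneg_left (norm_sum_le _ _) hr0
        _ = ∑ j, ((Real.sqrt (n : ℝ))⁻¹ * |∑ i ∈ Finset.range (S.n2 n j), S.ε2 j i ω|)
              * ‖lagoG S j (S.A2 n j ω) - lagoG S j (S.a2 j)‖ := by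
            rw [Finset.mul_sum]
            exact Finset.sum_congr rfl fun j _ => by
              rw [norm_smul, Real.norm_eq_abs, mul_assoc]
    -- event inclusion
    have hincl : {ω | ε ≤ dist (lagoPhi S n (lagoW' S n ω)) 0}
        ⊆ ⋃ j : Fin J2,
          ({ω | M ≤ (Real.sqrt (n : ℝ))⁻¹ * |∑ i ∈ Finset.range (S.n2 n j), S.ε2 j i ω|}
            ∪ {ω | εv ≤ dist (lagoG S j (S.A2 n j ω)) (lagoG S j (S.a2 j))}) := by
      intro ω hω
      simp only [Set.mem_setOf_eq] at hω
      by_contra hcon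
      simp only [Set.mem_iUnion, Set.mem_union, Set.mem_setOf_eq, not_exists, not_or,
        not_le] at hcon
      have hlt : ∀ j : Fin J2,
          ((Real.sqrt (n : ℝ))⁻¹ * |∑ i ∈ Finset.range (S.n2 n j), S.ε2 j i ω|)
            * ‖lagoG S j (S.A2 n j ω) - lagoG S j (S.a2 j)‖ < εJ := by
        intro j
        obtain ⟨h1, h2⟩ := hcon j
        rw [dist_eq_norm] at h2
        calc ((Real.sqrt (n : ℝ))⁻¹ * |∑ i ∈ Finset.range (S.n2 n j), S.ε2 j i ω|)
              * ‖lagoG S j (S.A2 n j ω) - lagoG S j (S.a2 j)‖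
            < M * εv := mul_lt_mul'' h1 h2 (by positivity) (norm_nonneg _)
          _ = εJ := by rw [hεvdef, mul_comm, div_mul_cancel₀ _ hM.ne']
      have hsum : (∑ j : Fin J2,
          ((Real.sqrt (n : ℝ))⁻¹ * |∑ i ∈ Finset.range (S.n2 n j), S.ε2 j i ω|)
            * ‖lagoG S j (S.A2 n j ω) - lagoG S j (S.a2 j)‖) < ε := by
        calc (∑ j : Fin J2, ((Real.sqrt (n : ℝ))⁻¹ *
                |∑ i ∈ Finset.range (S.n2 n j), S.ε2 j i ω|)
                * ‖lagoG S j (S.A2 n j ω) - lagoG S j (S.a2 j)‖)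
            < ∑ _j : Fin J2, εJ :=
              Finset.sum_lt_sum_of_nonempty Finset.univ_nonempty fun j _ => hlt j
          _ = (J2 : ℝ) * εJ := by
              simp [Finset.sum_const, Finset.card_univ, nsmul_eq_mul]
          _ = ε := by rw [hεJdef, mul_comm, div_mul_cancel₀ _ hJ2R.ne']
      exact absurd (le_trans hω (hpt ω)) (not_le.2 hsum)
    -- Chebyshev bound for each j
    have hcheb : ∀ j : Fin J2,
        Pr {ω | M ≤ (Real.sqrt (n : ℝ))⁻¹ * |∑ i ∈ Finset.range (S.n2 n j), S.ε2 j i ω|}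
          ≤ δ'' := by
      intro j
      have hn2le : S.n2 n j ≤ n := by
        have h1 : S.n2 n j ≤ ∑ j', S.n2 n j' :=
          Finset.single_le_sum (f := fun j' => S.n2 n j') (fun _ _ => Nat.zero_le _)
            (Finset.mem_univ j)
        have h2 : (∑ j', S.n2 n j') ≤ n := by
          conv_rhs => rw [← S.sum_sizes n]
          exact Nat.le_add_left _ _
        omega
      have hnpos : (0 : ℝ) < (n : ℝ) := by exact_mod_cast hn1
      set f : Ω → ℝ := fun ω =>
        (Real.sqrt (n : ℝ))⁻¹ * ∑ i ∈ Finset.range (S.n2 n j), S.ε2 j i ω with hfdef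
      have hfm : Measurable f :=
        measurable_const.mul (Finset.measurable_sum _ fun i _ => S.meas_ε2 j i)
      have hSbdd : ∀ ω, |∑ i ∈ Finset.range (S.n2 n j), S.ε2 j i ω|
          ≤ (S.n2 n j : ℝ) * S.bound := fun ω =>
        calc |∑ i ∈ Finset.range (S.n2 n j), S.ε2 j i ω|
            ≤ ∑ i ∈ Finset.range (S.n2 n j), |S.ε2 j i ω| := Finset.abs_sum_le_sum_abs _ _
          _ ≤ ∑ _i ∈ Finset.range (S.n2 n j), S.bound :=
              Finset.sum_le_sum fun i _ => S.ε2_bdd j i ω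
          _ = (S.n2 n j : ℝ) * S.bound := by
              simp [Finset.sum_const, Finset.card_range, nsmul_eq_mul]
      have hfbdd : ∀ ω, |f ω| ≤ (Real.sqrt (n : ℝ))⁻¹ * ((S.n2 n j : ℝ) * S.bound) := by
        intro ω
        rw [hfdef, abs_mul, abs_of_nonneg hr0]
        exact mul_le_mul_of_nonneg_left (hSbdd ω) hr0
      have hsqrtsq : ((Real.sqrt (n : ℝ))⁻¹) ^ 2 = ((n : ℝ))⁻¹ := by
        rw [inv_pow, Real.sq_sqrt hnpos.le]
      have hV : ∫ ω, f ω ^ 2 ∂Pr ≤ S.bound ^ 2 := by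
        have hsq : ∫ ω, f ω ^ 2 ∂Pr
            = ((n : ℝ))⁻¹ * ∫ ω, (∑ i ∈ Finset.range (S.n2 n j), S.ε2 j i ω) ^ 2 ∂Pr := by
          rw [hfdef]
          simp_rw [mul_pow]
          rw [integral_const_mul, hsqrtsq]
        rw [hsq]
        have h1 := aux_sum_sq_le S hb0 (S.n2 n j) j
        have hn2R : (S.n2 n j : ℝ) ≤ (n : ℝ) := by exact_mod_cast hn2le
        calc ((n : ℝ))⁻¹ * ∫ ω, (∑ i ∈ Finset.range (S.n2 n j), S.ε2 j i ω) ^ 2 ∂Pr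
            ≤ ((n : ℝ))⁻¹ * ((S.n2 n j : ℝ) * S.bound ^ 2) :=
              mul_le_mul_of_nonneg_left h1 (by positivity)
          _ ≤ ((n : ℝ))⁻¹ * ((n : ℝ) * S.bound ^ 2) :=
              mul_le_mul_of_nonneg_left
                (mul_le_mul_of_nonneg_right hn2R (by positivity)) (by positivity)
          _ = S.bound ^ 2 := by field_simp
      have hseteq : {ω | M ≤ (Real.sqrt (n : ℝ))⁻¹
            * |∑ i ∈ Finset.range (S.n2 n j), S.ε2 j i ω|} = {ω | M ≤ |f ω|} := by
        ext ω
        rw [hfdef]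
        simp [abs_mul, abs_of_nonneg hr0]
      rw [hseteq]
      calc Pr {ω | M ≤ |f ω|} ≤ ENNReal.ofReal (S.bound ^ 2 / M ^ 2) :=
            aux_meas_abs_ge_le hfm hfbdd hM hV
        _ ≤ δ'' := hMlt.le
    -- combine
    calc Pr {ω | ε ≤ dist (lagoPhi S n (lagoW' S n ω)) 0}
        ≤ Pr (⋃ j : Fin J2,
            ({ω | M ≤ (Real.sqrt (n : ℝ))⁻¹ * |∑ i ∈ Finset.range (S.n2 n j), S.ε2 j i ω|}
              ∪ {ω | εv ≤ dist (lagoG S j (S.A2 n j ω)) (lagoG S j (S.a2 j))})) :=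
          measure_mono hincl
      _ ≤ ∑ j : Fin J2, Pr
            ({ω | M ≤ (Real.sqrt (n : ℝ))⁻¹ * |∑ i ∈ Finset.range (S.n2 n j), S.ε2 j i ω|}
              ∪ {ω | εv ≤ dist (lagoG S j (S.A2 n j ω)) (lagoG S j (S.a2 j))}) :=
          measure_iUnion_fintype_le _ _
      _ ≤ ∑ _j : Fin J2, (δ'' + δ'') := by
          refine Finset.sum_le_sum fun j _ => ?_
          calc Pr _ ≤ Pr {ω | M ≤ (Real.sqrt (n : ℝ))⁻¹
                  * |∑ i ∈ Finset.range (S.n2 n j), S.ε2 j i ω|}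
                + Pr {ω | εv ≤ dist (lagoG S j (S.A2 n j ω)) (lagoG S j (S.a2 j))} :=
              measure_union_le _ _
            _ ≤ δ'' + δ'' := add_le_add (hcheb j) (hvn j)
      _ = (J2 : ℝ≥0∞) * (δ'' + δ'') := by
          simp [Finset.sum_const, Finset.card_univ, nsmul_eq_mul, mul_add]
      _ = c * (δ' / c) := by
          rw [hδ''def, ← two_mul, ← mul_assoc, hc, mul_comm (J2 : ℝ≥0∞) 2]
      _ = δ' := ENNReal.mul_div_cancel' (fun h => absurd h hc0) (fun h => absurd h hcne)
      _ ≤ δ := hδ'le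
  obtain ⟨N, hN⟩ := eventually_atTop.mp hfinal
  exact ⟨N, hN⟩


end
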